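/- arXiv:2101.06552 — 3 statements merged into one kernel-verified Lean document; each statement's English description precedes it below -/
import Mathlib

section
/- Let f : ℝⁿ → ℝ be differentiable and convex, and let x* be a minimizer of f. Fix p > 0, C > 0, and ζ ≥ 1. Suppose X : (0, ∞) → ℝⁿ is a twice differentiable curve satisfying the Bregman Euler–Lagrange equation X''(t) + ((ζp+1)/t)·X'(t) + C·p²·t^(p-2)·∇f(X(t)) = 0, with X extending continuously to t = 0 with X(0) = x₀ and X'(0) = 0 (in the sense that t·X'(t) → 0 as t → 0⁺). Then for all t > 0, f(X(t)) − f(x*) ≤ ζ·‖x₀ − x*‖² / (2C·t^p). -/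
set_option maxHeartbeats 1000000

open Real Set Filter RealInnerProductSpace

lemma grad_convex_ineq {n : ℕ} (f : EuclideanSpace ℝ (Fin n) → ℝ)
    (hf : Differentiable ℝ f) (hconv : ConvexOn ℝ Set.univ f)
    (x y : EuclideanSpace ℝ (Fin n)) :
    f x + ⟪gradient f x, y - x⟫ ≤ f y := by
  set g : ℝ → ℝ := fun s => f (x + s • (y - x)) with hg
  have hA : ∀ s : ℝ, HasDerivAt (fun s : ℝ => x + s • (y - x)) (y - x) s := by
    intro s
    simpa using ((hasDerivAt_id s).smul_const (y - x)).const_add x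
  have hgd : ∀ s : ℝ, HasDerivAt g ⟪gradient f (x + s • (y - x)), y - x⟫ s := by
    intro s
    have h1 := ((hf (x + s • (y - x))).hasGradientAt.hasFDerivAt).comp_hasDerivAt s (hA s)
    simp only [InnerProductSpace.toDual_apply_apply] at h1; exact h1
  have hgc : ConvexOn ℝ Set.univ g := by
    have h2 := hconv.comp_affineMap (AffineMap.lineMap x y : ℝ →ᵃ[ℝ] _)
    have : (f ∘ (AffineMap.lineMap x y : ℝ →ᵃ[ℝ] _)) = g := by
      funext s
      simp [AffineMap.lineMap_apply, hg, add_comm]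
    rw [this] at h2
    simpa using h2
  have hs := hgc.le_slope_of_hasDerivAt (mem_univ (0:ℝ)) (mem_univ (1:ℝ)) one_pos (hgd 0)
  rw [slope_def_field] at hs
  simp only [hg, zero_smul, add_zero, one_smul, add_sub_cancel, sub_zero, div_one] at hs
  linarith

/-- Convergence rate of the convex p-Bregman flow in ℝⁿ:
along solutions of X'' + ((ζp+1)/t) X' + C p² t^(p-2) ∇f(X) = 0,
f(X(t)) - f(x*) ≤ ζ‖x₀ - x*‖²/(2C t^p). -/
theorem bregman_convex_convergence_rate {n : ℕ}
    (f : EuclideanSpace ℝ (Fin n) → ℝ) (hf : Differentiable ℝ f)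
    (hconv : ConvexOn ℝ Set.univ f)
    (xstar : EuclideanSpace ℝ (Fin n)) (hmin : ∀ y, f xstar ≤ f y)
    (p C ζ : ℝ) (hp : 0 < p) (hC : 0 < C) (hζ : 1 ≤ ζ)
    (X X' X'' : ℝ → EuclideanSpace ℝ (Fin n)) (x₀ : EuclideanSpace ℝ (Fin n))
    (hX : ∀ t > (0:ℝ), HasDerivAt X (X' t) t)
    (hX' : ∀ t > (0:ℝ), HasDerivAt X' (X'' t) t)
    (hode : ∀ t > (0:ℝ),
      X'' t + ((ζ * p + 1) / t) • X' t + (C * p ^ 2 * t ^ (p - 2)) • gradient f (X t) = 0)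
    (hX0 : Tendsto X (nhdsWithin 0 (Ioi 0)) (nhds x₀))
    (hV0 : Tendsto (fun t => t • X' t) (nhdsWithin 0 (Ioi 0)) (nhds 0)) :
    ∀ t > (0:ℝ), f (X t) - f xstar ≤ ζ * ‖x₀ - xstar‖ ^ 2 / (2 * C * t ^ p) := by
  set E : ℝ → ℝ := fun t => C * t ^ p * (f (X t) - f xstar)
      + (ζ - 1) / 2 * ⟪xstar - X t, xstar - X t⟫
      + 1 / 2 * ⟪(t / p) • X' t - (xstar - X t), (t / p) • X' t - (xstar - X t)⟫ with hE_def
  set D : ℝ → ℝ := fun t =>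
      (C * (p * t ^ (p - 1)) * (f (X t) - f xstar) + C * t ^ p * ⟪gradient f (X t), X' t⟫)
      + (ζ - 1) / 2 * (⟪xstar - X t, -X' t⟫ + ⟪-X' t, xstar - X t⟫)
      + 1 / 2 * (⟪(t / p) • X' t - (xstar - X t), (t / p) • X'' t + (1 / p) • X' t - -X' t⟫
          + ⟪(t / p) • X'' t + (1 / p) • X' t - -X' t, (t / p) • X' t - (xstar - X t)⟫)
      with hD_def
  have hderiv : ∀ t, 0 < t → HasDerivAt E (D t) t := by
    intro t ht
    have hfX : HasDerivAt (fun s => f (X s)) ⟪gradient f (X t), X' t⟫ t := by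
      have h1 := ((hf (X t)).hasGradientAt.hasFDerivAt).comp_hasDerivAt t (hX t ht)
      simp only [InnerProductSpace.toDual_apply_apply] at h1; exact h1
    have h1 : HasDerivAt (fun s : ℝ => C * s ^ p) (C * (p * t ^ (p - 1))) t :=
      (Real.hasDerivAt_rpow_const (Or.inl ht.ne')).const_mul C
    have hu' : HasDerivAt (fun s => xstar - X s) (-X' t) t := (hX t ht).const_sub xstar
    have hw' : HasDerivAt (fun s => (s / p) • X' s - (xstar - X s))
        ((t / p) • X'' t + (1 / p) • X' t - -X' t) t :=
      (((hasDerivAt_id t).div_const p).smul (hX' t ht)).sub hu'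
    exact ((h1.mul (hfX.sub_const _)).add
      ((hu'.inner ℝ hu').const_mul ((ζ - 1) / 2))).add
      ((hw'.inner ℝ hw').const_mul (1 / 2 : ℝ))
  have hnonpos : ∀ t, 0 < t → D t ≤ 0 := by
    intro t ht
    have ha : X'' t = -(((ζ * p + 1) / t) • X' t + (C * p ^ 2 * t ^ (p - 2)) • gradient f (X t)) := by
      have h0 := hode t ht
      rwa [add_assoc, add_eq_zero_iff_eq_neg] at h0
    have hgrad := grad_convex_ineq f hf hconv (X t) xstar
    rw [inner_sub_right] at hgrad
    have e1 : t ^ (p - 1) = t ^ (p - 2) * t := by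
      rw [← Real.rpow_add_one ht.ne']; ring_nf
    have e2 : t ^ p = t ^ (p - 2) * t * t := by
      rw [← Real.rpow_add_one ht.ne', ← Real.rpow_add_one ht.ne']; ring_nf
    have hq : (0:ℝ) < t ^ (p - 2) := Real.rpow_pos_of_pos ht _
    have hvv : (0:ℝ) ≤ ⟪X' t, X' t⟫ := real_inner_self_nonneg
    have hid : D t = C * p * (t ^ (p - 2) * t) *
        ((f (X t) - f xstar) + (⟪gradient f (X t), xstar⟫ - ⟪gradient f (X t), X t⟫))
        + (1 - ζ) * (t / p) * ⟪X' t, X' t⟫ := by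
      simp only [hD_def, ha, smul_add, smul_neg, smul_smul, neg_neg,
        inner_add_left, inner_add_right, inner_sub_left, inner_sub_right,
        inner_neg_left, inner_neg_right, real_inner_smul_left, real_inner_smul_right,
        real_inner_comm (X' t) (gradient f (X t)), real_inner_comm (X t) (gradient f (X t)),
        real_inner_comm xstar (gradient f (X t)), real_inner_comm (X t) (X' t),
        real_inner_comm xstar (X' t), real_inner_comm xstar (X t)]
      rw [e2, e1]
      field_simp
      ring
    rw [hid]
    have h1ζ : 1 - ζ ≤ 0 := by linarith
    have hfac : (0:ℝ) ≤ C * p * (t ^ (p - 2) * t) := by positivity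
    have hterm1 : C * p * (t ^ (p - 2) * t) *
        ((f (X t) - f xstar) + (⟪gradient f (X t), xstar⟫ - ⟪gradient f (X t), X t⟫)) ≤ 0 :=
      mul_nonpos_of_nonneg_of_nonpos hfac (by linarith)
    nlinarith [mul_nonneg (div_nonneg ht.le hp.le) hvv]
  have hmono : ∀ s t : ℝ, 0 < s → s ≤ t → E t ≤ E s := by
    intro s t hs hst
    have hsub : Icc s t ⊆ Ioi 0 := fun x hx => lt_of_lt_of_le hs hx.1
    have cont : ContinuousOn E (Icc s t) := fun x hx =>
      ((hderiv x (hsub hx)).continuousAt).continuousWithinAt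
    have diff : DifferentiableOn ℝ E (interior (Icc s t)) := fun x hx =>
      ((hderiv x (hsub (interior_subset hx))).differentiableAt).differentiableWithinAt
    have h0 : ∀ x ∈ interior (Icc s t), deriv E x ≤ 0 := by
      intro x hx
      rw [(hderiv x (hsub (interior_subset hx))).deriv]
      exact hnonpos x (hsub (interior_subset hx))
    exact antitoneOn_of_deriv_nonpos (convex_Icc s t) cont diff h0
      (left_mem_Icc.2 hst) (right_mem_Icc.2 hst) hst
  have hlim : Tendsto E (nhdsWithin 0 (Ioi 0)) (nhds (ζ / 2 * ‖x₀ - xstar‖ ^ 2)) := by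
    have hfl : Tendsto (fun t => f (X t)) (nhdsWithin 0 (Ioi 0)) (nhds (f x₀)) :=
      (hf.continuous.continuousAt.tendsto).comp hX0
    have hpl : Tendsto (fun t : ℝ => t ^ p) (nhdsWithin 0 (Ioi 0)) (nhds 0) := by
      have h := (Real.continuousAt_rpow_const 0 p (Or.inr hp.le)).tendsto
      rw [Real.zero_rpow hp.ne'] at h
      exact h.mono_left nhdsWithin_le_nhds
    have hul : Tendsto (fun t => xstar - X t) (nhdsWithin 0 (Ioi 0)) (nhds (xstar - x₀)) :=
      tendsto_const_nhds.sub hX0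
    have hsl : Tendsto (fun t => (t / p) • X' t) (nhdsWithin 0 (Ioi 0)) (nhds 0) := by
      have h := hV0.const_smul (1 / p : ℝ)
      rw [smul_zero] at h
      refine h.congr fun t => ?_
      rw [smul_smul, one_div, inv_mul_eq_div]
    have hwl : Tendsto (fun t => (t / p) • X' t - (xstar - X t)) (nhdsWithin 0 (Ioi 0))
        (nhds (0 - (xstar - x₀))) := hsl.sub hul
    have hEl : Tendsto E (nhdsWithin 0 (Ioi 0)) (nhds
        (C * 0 * (f x₀ - f xstar)
          + (ζ - 1) / 2 * ⟪xstar - x₀, xstar - x₀⟫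
          + 1 / 2 * ⟪0 - (xstar - x₀), 0 - (xstar - x₀)⟫)) := by
      exact (((tendsto_const_nhds.mul hpl).mul (hfl.sub tendsto_const_nhds)).add
        ((hul.inner hul).const_mul ((ζ - 1) / 2))).add
        ((hwl.inner hwl).const_mul (1 / 2 : ℝ))
    have hval : C * 0 * (f x₀ - f xstar)
          + (ζ - 1) / 2 * ⟪xstar - x₀, xstar - x₀⟫
          + 1 / 2 * ⟪0 - (xstar - x₀), 0 - (xstar - x₀)⟫ = ζ / 2 * ‖x₀ - xstar‖ ^ 2 := by
      rw [zero_sub, inner_neg_neg, real_inner_self_eq_norm_sq, norm_sub_rev]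
      ring
    rw [← hval]
    exact hEl
  have key : ∀ t, 0 < t → C * t ^ p * (f (X t) - f xstar) ≤ ζ / 2 * ‖x₀ - xstar‖ ^ 2 := by
    intro t ht
    have hle : E t ≤ ζ / 2 * ‖x₀ - xstar‖ ^ 2 := by
      refine ge_of_tendsto hlim ?_
      filter_upwards [Ioo_mem_nhdsGT_of_mem (⟨le_refl (0:ℝ), ht⟩ : (0:ℝ) ∈ Ico 0 t)] with s hs
      exact hmono s t hs.1 hs.2.le
    have h2 : (0:ℝ) ≤ (ζ - 1) / 2 * ⟪xstar - X t, xstar - X t⟫ :=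
      mul_nonneg (by linarith) real_inner_self_nonneg
    have h3 : (0:ℝ) ≤ 1 / 2 * ⟪(t / p) • X' t - (xstar - X t), (t / p) • X' t - (xstar - X t)⟫ :=
      mul_nonneg (by norm_num) real_inner_self_nonneg
    simp only [hE_def] at hle
    linarith
  intro t ht
  have h1 := key t ht
  have htp : (0:ℝ) < t ^ p := Real.rpow_pos_of_pos ht p
  rw [le_div_iff₀ (by positivity)]
  nlinarith [h1]
end

section
/- Let f : ℝⁿ → ℝ be differentiable and α-weakly-quasi-convex with respect to a minimizer x* for some α ∈ (0,1], i.e. α·(f(x*) − f(y)) ≥ ⟨∇f(y), x* − y⟩ for all y. Fix p > 0, C > 0, ζ ≥ 1. Suppose X : (0,∞) → ℝⁿ is twice differentiable, satisfies X''(t) + ((ζp+α)/(αt))·X'(t) + C·p²·t^(p-2)·∇f(X(t)) = 0, with X(0) = x₀ and t·X'(t) → 0 as t → 0⁺. Then for all t > 0, f(X(t)) − f(x*) ≤ ζ·‖x₀ − x*‖² / (2C·α²·t^p). -/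
open Real Set Filter

lemma grad_chain_aux {n : ℕ} (f : EuclideanSpace ℝ (Fin n) → ℝ) {X : ℝ → EuclideanSpace ℝ (Fin n)}
    {v : EuclideanSpace ℝ (Fin n)} {t : ℝ} (hf : DifferentiableAt ℝ f (X t))
    (hX : HasDerivAt X v t) :
    HasDerivAt (fun s => f (X s)) (inner ℝ (gradient f (X t)) v : ℝ) t := by
  have h := hf.hasGradientAt
  rw [hasGradientAt_iff_hasFDerivAt] at h
  exact h.comp_hasDerivAt t hX

set_option maxHeartbeats 1000000 in
/-- Convergence rate of the α-weakly-quasi-convex p-Bregman flow in ℝⁿ. -/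
theorem bregman_wqc_convergence_rate {n : ℕ}
    (f : EuclideanSpace ℝ (Fin n) → ℝ) (hf : Differentiable ℝ f)
    (α : ℝ) (hα0 : 0 < α) (hα1 : α ≤ 1)
    (xstar : EuclideanSpace ℝ (Fin n)) (hmin : ∀ y, f xstar ≤ f y)
    (hwqc : ∀ y, α * (f xstar - f y) ≥ inner ℝ (gradient f y) (xstar - y))
    (p C ζ : ℝ) (hp : 0 < p) (hC : 0 < C) (hζ : 1 ≤ ζ)
    (X X' X'' : ℝ → EuclideanSpace ℝ (Fin n)) (x₀ : EuclideanSpace ℝ (Fin n))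
    (hX : ∀ t > (0:ℝ), HasDerivAt X (X' t) t)
    (hX' : ∀ t > (0:ℝ), HasDerivAt X' (X'' t) t)
    (hode : ∀ t > (0:ℝ),
      X'' t + ((ζ * p + α) / (α * t)) • X' t + (C * p ^ 2 * t ^ (p - 2)) • gradient f (X t) = 0)
    (hX0 : Tendsto X (nhdsWithin 0 (Ioi 0)) (nhds x₀))
    (hV0 : Tendsto (fun t => t • X' t) (nhdsWithin 0 (Ioi 0)) (nhds 0)) :
    ∀ t > (0:ℝ), f (X t) - f xstar ≤ ζ * ‖x₀ - xstar‖ ^ 2 / (2 * C * α ^ 2 * t ^ p) := by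
  set g : ℝ → EuclideanSpace ℝ (Fin n) := fun s => gradient f (X s) with hg
  set a : ℝ → ℝ := fun s => f (X s) - f xstar with ha
  set Y : ℝ → EuclideanSpace ℝ (Fin n) := fun s => (α * s / p) • X' s - (xstar - X s) with hY
  set E : ℝ → ℝ := fun s => C * α ^ 2 * s ^ p * a s
      + (ζ - 1) / 2 * (inner ℝ (xstar - X s) (xstar - X s) : ℝ)
      + 1 / 2 * (inner ℝ (Y s) (Y s) : ℝ) with hE
  set Y' : ℝ → EuclideanSpace ℝ (Fin n) :=
      fun s => ((α * s / p) • X'' s + (α / p) • X' s) + X' s with hY'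
  set D : ℝ → ℝ := fun s =>
      (C * α ^ 2 * (p * s ^ (p - 1)) * a s + C * α ^ 2 * s ^ p * (inner ℝ (g s) (X' s) : ℝ))
      + (ζ - 1) / 2 * ((inner ℝ (xstar - X s) (-(X' s)) : ℝ) + (inner ℝ (-(X' s) : EuclideanSpace ℝ (Fin n)) (xstar - X s) : ℝ))
      + 1 / 2 * ((inner ℝ (Y s) (Y' s) : ℝ) + (inner ℝ (Y' s) (Y s) : ℝ)) with hD
  have hp' : p ≠ 0 := hp.ne'
  -- derivative of E
  have hEderiv : ∀ s > (0:ℝ), HasDerivAt E (D s) s := by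
    intro s hs
    have hpow : HasDerivAt (fun u : ℝ => u ^ p) (p * s ^ (p - 1)) s :=
      Real.hasDerivAt_rpow_const (Or.inl hs.ne')
    have haD : HasDerivAt a (inner ℝ (g s) (X' s) : ℝ) s :=
      (grad_chain_aux f (hf (X s)) (hX s hs)).sub_const (f xstar)
    have h1 : HasDerivAt (fun u => C * α ^ 2 * u ^ p * a u)
        (C * α ^ 2 * (p * s ^ (p - 1)) * a s + C * α ^ 2 * s ^ p * (inner ℝ (g s) (X' s) : ℝ)) s := by
      have := (hpow.const_mul (C * α ^ 2)).mul haD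
      exact this
    have hXs : HasDerivAt (fun u => xstar - X u) (-(X' s)) s := by
      have := (hasDerivAt_const s xstar).sub (hX s hs)
      simp only [zero_sub] at this
      exact this
    have h2 : HasDerivAt (fun u => (inner ℝ (xstar - X u) (xstar - X u) : ℝ))
        ((inner ℝ (xstar - X s) (-(X' s)) : ℝ) + (inner ℝ (-(X' s) : EuclideanSpace ℝ (Fin n)) (xstar - X s) : ℝ)) s :=
      hXs.inner ℝ hXs
    have hc : HasDerivAt (fun u : ℝ => α * u / p) (α / p) s := by
      simpa using ((hasDerivAt_id s).const_mul α).div_const p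
    have hYd : HasDerivAt Y (Y' s) s := by
      have := (hc.smul (hX' s hs)).sub hXs
      refine this.congr_deriv ?_
      simp only [hY']
      module
    have h3 : HasDerivAt (fun u => (inner ℝ (Y u) (Y u) : ℝ))
        ((inner ℝ (Y s) (Y' s) : ℝ) + (inner ℝ (Y' s) (Y s) : ℝ)) s := hYd.inner ℝ hYd
    exact (h1.add (h2.const_mul ((ζ - 1) / 2))).add (h3.const_mul (1 / 2))
  -- derivative is nonpositive
  have hDneg : ∀ s > (0:ℝ), D s ≤ 0 := by
    intro s hs
    have hXpp : X'' s = -(((ζ * p + α) / (α * s)) • X' s + (C * p ^ 2 * s ^ (p - 2)) • g s) := by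
      have h := hode s hs
      rw [add_assoc] at h
      exact eq_neg_of_add_eq_zero_left h
    have e1 : s ^ (p - 1) = s ^ (p - 2) * s := by
      rw [← Real.rpow_add_one hs.ne' (p - 2)]; congr 1; ring
    have e2 : s ^ p = s ^ (p - 2) * s * s := by
      rw [← Real.rpow_add_one hs.ne' (p - 2), ← Real.rpow_add_one hs.ne']; congr 1; ring
    have hexp : D s = C * α ^ 2 * p * (s ^ (p - 2) * s) * a s
        + (1 - ζ) * (α * s / p) * (inner ℝ (X' s) (X' s) : ℝ)
        + C * α * p * (s ^ (p - 2) * s) * (inner ℝ (g s) (xstar - X s) : ℝ) := by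
      simp only [hD, hY, hY', hXpp, e1, e2, inner_add_left, inner_add_right, inner_sub_left,
        inner_sub_right, inner_smul_left, inner_smul_right, inner_neg_left, inner_neg_right,
        RCLike.star_def, conj_trivial]
      simp only [real_inner_comm (X' s) (g s), real_inner_comm (g s) xstar,
        real_inner_comm (g s) (X s), real_inner_comm (X' s) xstar, real_inner_comm (X' s) (X s)]
      field_simp
      ring
    have hQ : (0:ℝ) ≤ s ^ (p - 2) := Real.rpow_nonneg hs.le _
    have hs1 : (0:ℝ) ≤ (inner ℝ (X' s) (X' s) : ℝ) := real_inner_self_nonneg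
    have ha0 : 0 ≤ a s := sub_nonneg.2 (hmin (X s))
    have hs4 : (inner ℝ (g s) (xstar - X s) : ℝ) ≤ -(α * a s) := by
      have h := hwqc (X s)
      simp only [ha, hg]
      simp only [ge_iff_le] at h
      linarith
    rw [hexp]
    have hk : (0:ℝ) ≤ C * α * p * (s ^ (p - 2) * s) :=
      mul_nonneg (mul_nonneg (mul_nonneg hC.le hα0.le) hp.le) (mul_nonneg hQ hs.le)
    have h13 : C * α * p * (s ^ (p - 2) * s) * (α * a s + (inner ℝ (g s) (xstar - X s) : ℝ)) ≤ 0 :=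
      mul_nonpos_of_nonneg_of_nonpos hk (by linarith)
    have h2 : (1 - ζ) * (α * s / p) * (inner ℝ (X' s) (X' s) : ℝ) ≤ 0 := by
      apply mul_nonpos_of_nonpos_of_nonneg _ hs1
      apply mul_nonpos_of_nonpos_of_nonneg (by linarith)
      positivity
    have h13' : C * α ^ 2 * p * (s ^ (p - 2) * s) * a s
        + C * α * p * (s ^ (p - 2) * s) * (inner ℝ (g s) (xstar - X s) : ℝ) ≤ 0 := by
      have hr : C * α ^ 2 * p * (s ^ (p - 2) * s) * a s
          + C * α * p * (s ^ (p - 2) * s) * (inner ℝ (g s) (xstar - X s) : ℝ)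
          = C * α * p * (s ^ (p - 2) * s) * (α * a s + (inner ℝ (g s) (xstar - X s) : ℝ)) := by
        ring
      rw [hr]; exact h13
    have hsplit : C * α ^ 2 * p * (s ^ (p - 2) * s) * a s
        + (1 - ζ) * (α * s / p) * (inner ℝ (X' s) (X' s) : ℝ)
        + C * α * p * (s ^ (p - 2) * s) * (inner ℝ (g s) (xstar - X s) : ℝ)
        = (C * α ^ 2 * p * (s ^ (p - 2) * s) * a s
          + C * α * p * (s ^ (p - 2) * s) * (inner ℝ (g s) (xstar - X s) : ℝ))
          + (1 - ζ) * (α * s / p) * (inner ℝ (X' s) (X' s) : ℝ) := by ring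
    rw [hsplit]
    exact add_nonpos h13' h2
  -- E is antitone-ish : for 0 < s ≤ t, E t ≤ E s
  have hmono : ∀ s t : ℝ, 0 < s → s ≤ t → E t ≤ E s := by
    intro s t hs hst
    have hanti : AntitoneOn E (Icc s t) := by
      apply antitoneOn_of_deriv_nonpos (convex_Icc s t)
      · intro x hx
        exact (hEderiv x (lt_of_lt_of_le hs hx.1)).continuousAt.continuousWithinAt
      · intro x hx
        rw [interior_Icc] at hx
        exact ((hEderiv x (lt_trans hs hx.1)).differentiableAt).differentiableWithinAt
      · intro x hx
        rw [interior_Icc] at hx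
        rw [(hEderiv x (lt_trans hs hx.1)).deriv]
        exact hDneg x (lt_trans hs hx.1)
    exact hanti (left_mem_Icc.2 hst) (right_mem_Icc.2 hst) hst
  -- limit of E at 0⁺
  have hlim : Tendsto E (nhdsWithin 0 (Ioi 0)) (nhds (ζ / 2 * ‖x₀ - xstar‖ ^ 2)) := by
    have hpow0 : Tendsto (fun s : ℝ => s ^ p) (nhdsWithin 0 (Ioi 0)) (nhds 0) := by
      have : ContinuousAt (fun s : ℝ => s ^ p) 0 :=
        Real.continuousAt_rpow_const 0 p (Or.inr hp.le)
      have h : Tendsto (fun s : ℝ => s ^ p) (nhdsWithin 0 (Ioi 0)) (nhds ((0:ℝ) ^ p)) :=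
        this.tendsto.mono_left nhdsWithin_le_nhds
      rwa [Real.zero_rpow hp'] at h
    have hfa : Tendsto a (nhdsWithin 0 (Ioi 0)) (nhds (f x₀ - f xstar)) :=
      ((hf.continuous.tendsto x₀).comp hX0).sub_const (f xstar)
    have hterm1 : Tendsto (fun s => C * α ^ 2 * s ^ p * a s) (nhdsWithin 0 (Ioi 0)) (nhds 0) := by
      have h := ((hpow0.const_mul (C * α ^ 2)).mul hfa)
      simpa only [mul_zero, zero_mul] using h
    have hXsub : Tendsto (fun s => xstar - X s) (nhdsWithin 0 (Ioi 0)) (nhds (xstar - x₀)) :=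
      tendsto_const_nhds.sub hX0
    have hterm2 : Tendsto (fun s => (ζ - 1) / 2 * (inner ℝ (xstar - X s) (xstar - X s) : ℝ))
        (nhdsWithin 0 (Ioi 0)) (nhds ((ζ - 1) / 2 * (inner ℝ (xstar - x₀) (xstar - x₀) : ℝ))) :=
      (hXsub.inner hXsub).const_mul _
    have hYlim : Tendsto Y (nhdsWithin 0 (Ioi 0)) (nhds (x₀ - xstar)) := by
      have h1 : Tendsto (fun s => (α * s / p) • X' s) (nhdsWithin 0 (Ioi 0)) (nhds 0) := by
        have : (fun s => (α * s / p) • X' s) = fun s => (α / p) • (s • X' s) := by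
          funext s; rw [smul_smul]; congr 1; ring
        rw [this]
        have h := hV0.const_smul (α / p)
        simpa only [smul_zero] using h
      have h2 := h1.sub hXsub
      simpa only [zero_sub, neg_sub] using h2
    have hterm3 : Tendsto (fun s => 1 / 2 * (inner ℝ (Y s) (Y s) : ℝ))
        (nhdsWithin 0 (Ioi 0)) (nhds (1 / 2 * (inner ℝ (x₀ - xstar) (x₀ - xstar) : ℝ))) :=
      (hYlim.inner hYlim).const_mul (1 / 2 : ℝ)
    have := (hterm1.add hterm2).add hterm3
    have heq : (0:ℝ) + (ζ - 1) / 2 * (inner ℝ (xstar - x₀) (xstar - x₀) : ℝ)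
        + 1 / 2 * (inner ℝ (x₀ - xstar) (x₀ - xstar) : ℝ) = ζ / 2 * ‖x₀ - xstar‖ ^ 2 := by
      simp only [real_inner_self_eq_norm_sq]
      rw [norm_sub_rev xstar x₀]
      ring
    rw [heq] at this
    exact this
  -- conclude
  have hat : ∀ u : ℝ, a u = f (X u) - f xstar := fun _ => rfl
  clear_value g a Y E Y' D
  intro t ht
  have hEt : E t ≤ ζ / 2 * ‖x₀ - xstar‖ ^ 2 := by
    refine ge_of_tendsto hlim ?_
    filter_upwards [Ioo_mem_nhdsGT_of_mem (left_mem_Ico.2 ht)] with s hs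
    exact hmono s t hs.1 hs.2.le
  have h2 : 0 ≤ (ζ - 1) / 2 * (inner ℝ (xstar - X t) (xstar - X t) : ℝ) :=
    mul_nonneg (by linarith) real_inner_self_nonneg
  have h3 : 0 ≤ 1 / 2 * (inner ℝ (Y t) (Y t) : ℝ) :=
    mul_nonneg (by norm_num) real_inner_self_nonneg
  simp only [hE] at hEt
  have hkey : C * α ^ 2 * t ^ p * a t ≤ ζ / 2 * ‖x₀ - xstar‖ ^ 2 := by
    calc C * α ^ 2 * t ^ p * a t
        ≤ C * α ^ 2 * t ^ p * a t
          + (ζ - 1) / 2 * (inner ℝ (xstar - X t) (xstar - X t) : ℝ) := le_add_of_nonneg_right h2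
      _ ≤ C * α ^ 2 * t ^ p * a t
          + (ζ - 1) / 2 * (inner ℝ (xstar - X t) (xstar - X t) : ℝ)
          + 1 / 2 * (inner ℝ (Y t) (Y t) : ℝ) := le_add_of_nonneg_right h3
      _ ≤ ζ / 2 * ‖x₀ - xstar‖ ^ 2 := hEt
  rw [hat t] at hkey
  have htp : (0:ℝ) < t ^ p := Real.rpow_pos_of_pos ht p
  have hden : (0:ℝ) < 2 * C * α ^ 2 * t ^ p := by positivity
  rw [le_div_iff₀ hden]
  linarith [hkey]
end

section
/- Let f : ℝⁿ → ℝ be differentiable, C > 0, p > 0, p̊ > 0, v ∈ ℝ. Suppose X : (0,∞) → ℝⁿ is twice differentiable and satisfies X''(t) + ((vp+1)/t)·X'(t) + C·p²·t^(p-2)·∇f(X(t)) = 0 for all t > 0. Then the reparametrized curve Y(t) = X(t^(p̊/p)) satisfies Y''(t) + ((v·p̊+1)/t)·Y'(t) + C·p̊²·t^(p̊-2)·∇f(Y(t)) = 0 for all t > 0. -/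
open Real

/-- Time-rescaling invariance of the family of p-Bregman Euler–Lagrange equations in ℝⁿ:
if X solves the p-equation, then Y(t) = X(t^(p̊/p)) solves the p̊-equation. -/
theorem bregman_time_rescaling {n : ℕ}
    (f : EuclideanSpace ℝ (Fin n) → ℝ) (hf : Differentiable ℝ f)
    (C p p' v : ℝ) (hC : 0 < C) (hp : 0 < p) (hp' : 0 < p')
    (X X' X'' : ℝ → EuclideanSpace ℝ (Fin n))
    (hX : ∀ t > (0:ℝ), HasDerivAt X (X' t) t)
    (hX' : ∀ t > (0:ℝ), HasDerivAt X' (X'' t) t)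
    (hode : ∀ t > (0:ℝ),
      X'' t + ((v * p + 1) / t) • X' t + (C * p ^ 2 * t ^ (p - 2)) • gradient f (X t) = 0)
    (Y' Y'' : ℝ → EuclideanSpace ℝ (Fin n))
    (hY : ∀ t > (0:ℝ), HasDerivAt (fun s => X (s ^ (p' / p))) (Y' t) t)
    (hY' : ∀ t > (0:ℝ), HasDerivAt Y' (Y'' t) t) :
    ∀ t > (0:ℝ),
      Y'' t + ((v * p' + 1) / t) • Y' t
        + (C * p' ^ 2 * t ^ (p' - 2)) • gradient f (X (t ^ (p' / p))) = 0 := by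
  intro t ht
  set α := p' / p with hαdef
  have hα : 0 < α := div_pos hp' hp
  have hαp : α * p = p' := div_mul_cancel₀ _ hp.ne'
  have hτ : (0:ℝ) < t ^ α := Real.rpow_pos_of_pos ht α
  have hpow : ∀ s > (0:ℝ), HasDerivAt (fun u : ℝ => u ^ α) (α * s ^ (α - 1)) s := by
    intro s hs
    simpa using Real.hasDerivAt_rpow_const (p := α) (Or.inl hs.ne')
  have hcomp : ∀ s > (0:ℝ),
      HasDerivAt (fun u : ℝ => X (u ^ α)) ((α * s ^ (α - 1)) • X' (s ^ α)) s := by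
    intro s hs
    exact (hX _ (Real.rpow_pos_of_pos hs α)).scomp s (hpow s hs)
  have hY'eq : ∀ s > (0:ℝ), Y' s = (α * s ^ (α - 1)) • X' (s ^ α) := fun s hs =>
    (hY s hs).unique (hcomp s hs)
  have hc : HasDerivAt (fun s : ℝ => α * s ^ (α - 1)) (α * ((α - 1) * t ^ (α - 1 - 1))) t :=
    (Real.hasDerivAt_rpow_const (p := α - 1) (Or.inl ht.ne')).const_mul α
  have hf' : HasDerivAt (fun s : ℝ => X' (s ^ α)) ((α * t ^ (α - 1)) • X'' (t ^ α)) t :=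
    (hX' _ hτ).scomp t (hpow t ht)
  have hg : HasDerivAt (fun s : ℝ => (α * s ^ (α - 1)) • X' (s ^ α))
      ((α * t ^ (α - 1)) • ((α * t ^ (α - 1)) • X'' (t ^ α))
        + (α * ((α - 1) * t ^ (α - 1 - 1))) • X' (t ^ α)) t := hc.smul hf'
  have hYg : HasDerivAt Y'
      ((α * t ^ (α - 1)) • ((α * t ^ (α - 1)) • X'' (t ^ α))
        + (α * ((α - 1) * t ^ (α - 1 - 1))) • X' (t ^ α)) t :=
    hg.congr_of_eventuallyEq
      (Filter.eventuallyEq_of_mem (Ioi_mem_nhds ht) (fun s hs => hY'eq s hs))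
  have hY''eq : Y'' t = (α * t ^ (α - 1)) • ((α * t ^ (α - 1)) • X'' (t ^ α))
        + (α * ((α - 1) * t ^ (α - 1 - 1))) • X' (t ^ α) := (hY' t ht).unique hYg
  have hodeτ := hode (t ^ α) hτ
  have h2 : X'' (t ^ α) = -((C * p ^ 2 * (t ^ α) ^ (p - 2)) • gradient f (X (t ^ α)))
      - ((v * p + 1) / t ^ α) • X' (t ^ α) := by
    linear_combination (norm := module) hodeτ
  rw [hY''eq, hY'eq t ht, h2]
  -- scalar identities
  have k1 : t ^ (α - 1) * (t ^ (α - 1) * (t ^ α) ^ (p - 2)) = t ^ (p' - 2) := by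
    rw [← Real.rpow_mul ht.le, ← Real.rpow_add ht, ← Real.rpow_add ht]
    congr 1
    rw [← hαp]; ring
  have k2 : t ^ (α - 1) * t ^ (α - 1) / t ^ α = t ^ (α - 1 - 1) := by
    rw [← Real.rpow_add ht, ← Real.rpow_sub ht]
    congr 1; ring
  have k3 : t ^ (α - 1) / t = t ^ (α - 1 - 1) := by
    rw [Real.rpow_sub ht (α - 1) 1, Real.rpow_one]
  match_scalars
  · linear_combination (-(α ^ 2 * C * p ^ 2)) * k1 - C * (α * p + p') * t ^ (p' - 2) * hαp
  · linear_combination (-(α ^ 2 * (v * p + 1))) * k2 + (α * (v * p' + 1)) * k3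
      + (-(α * v * t ^ (α - 1 - 1))) * hαp
end
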